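/- Let A → B → C be an exact triangle in a triangulated category with B = B₁ ⊕ B₂. If A₀ → A → B₂ is an exact triangle completing the composite A → B → B₂ (where the second map is the projection), then there is an exact triangle A₀ → B₁ → C. -/

import Mathlib

open CategoryTheory CategoryTheory.Limits CategoryTheory.Pretriangulated

/-- Let `A → B → C` be a distinguished (exact) triangle in a triangulated
category with `B = B₁ ⊞ B₂` a biproduct. If `A₀ → A → B₂` is a distinguished triangle
completing the composite `A → B → B₂` (second map the biproduct projection), then there is a
distinguished triangle `A₀ → B₁ → C`, where the map `B₁ → C` is obtained by composing with the
biproduct inclusion. (An application of the octahedral axiom.) -/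
theorem stmt0 {C : Type*} [Category C] [Preadditive C] [HasZeroObject C]
    [HasShift C ℤ] [∀ n : ℤ, (CategoryTheory.shiftFunctor C n).Additive]
    [Pretriangulated C] [IsTriangulated C] [HasBinaryBiproducts C]
    (A B₁ B₂ Cobj A₀ : C)
    (f : A ⟶ B₁ ⊞ B₂) (g : B₁ ⊞ B₂ ⟶ Cobj) (h : Cobj ⟶ A⟦(1 : ℤ)⟧)
    (hT : Triangle.mk f g h ∈ distTriang C)
    (i : A₀ ⟶ A) (δ : B₂ ⟶ A₀⟦(1 : ℤ)⟧)
    (hT₀ : Triangle.mk i (f ≫ biprod.snd) δ ∈ distTriang C) :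
    ∃ (u : A₀ ⟶ B₁) (w : Cobj ⟶ A₀⟦(1 : ℤ)⟧),
      Triangle.mk u (biprod.inl ≫ g) w ∈ distTriang C := by
  have hsnd : Triangle.mk (biprod.inl : B₁ ⟶ B₁ ⊞ B₂) biprod.snd 0 ∈ distTriang C :=
    binaryBiproductTriangle_distinguished B₁ B₂
  have h23 := rot_of_distTriang _ hsnd
  have h13 := rot_of_distTriang _ hT₀
  dsimp [Triangle.rotate] at h23 h13
  have H := Triangulated.someOctahedron (u₁₂ := f) (u₂₃ := (biprod.snd : B₁ ⊞ B₂ ⟶ B₂))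
    (u₁₃ := f ≫ biprod.snd) rfl hT h23 h13
  refine ⟨-((shiftFunctor C (1:ℤ)).preimage H.m₃), H.m₁, ?_⟩
  rw [Pretriangulated.rotate_distinguished_triangle, Pretriangulated.rotate_distinguished_triangle]
  convert H.mem using 2
  simp only [Triangle.rotate]
  congr 1
  · exact (by rw [Functor.map_neg, Functor.map_preimage, neg_neg] : -(shiftFunctor C (1:ℤ)).map (-(shiftFunctor C (1:ℤ)).preimage H.m₃) = H.m₃)
  · exact (by rw [Functor.map_comp, Preadditive.neg_comp] : -(shiftFunctor C (1:ℤ)).map (biprod.inl ≫ g) = (-(shiftFunctor C (1:ℤ)).map biprod.inl) ≫ (shiftFunctor C (1:ℤ)).map g)
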